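/- Let i, j, N be integers with 0 < i ≤ j and 2j ≤ N. Then the binomial coefficients C(N,i) and C(N,j) have a common divisor greater than 1; that is, gcd(C(N,i), C(N,j)) > 1. -/

import Mathlib

theorem stmt_0 (i j N : ℕ) (hi : 0 < i) (hij : i ≤ j) (hjN : 2 * j ≤ N) :
    1 < Nat.gcd (N.choose i) (N.choose j) := by
  have hjN' : j < N := lt_of_lt_of_le (by omega) hjN
  have hiN : i ≤ N := le_of_lt (lt_of_le_of_lt hij hjN')
  by_contra h
  push_neg at h
  have hpos : 0 < Nat.gcd (N.choose i) (N.choose j) :=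
    Nat.gcd_pos_of_pos_left _ (Nat.choose_pos hiN)
  have hcop : Nat.Coprime (N.choose i) (N.choose j) := by
    unfold Nat.Coprime; omega
  have key : N.choose j * j.choose i = N.choose i * (N - i).choose (j - i) :=
    Nat.choose_mul hij
  have hdvd : N.choose i ∣ N.choose j * j.choose i := ⟨_, key⟩
  have hdvd' : N.choose i ∣ j.choose i := hcop.dvd_of_dvd_mul_left hdvd
  have hle : N.choose i ≤ j.choose i := Nat.le_of_dvd (Nat.choose_pos hij) hdvd'
  have hlt : j.choose i < N.choose i := by
    obtain ⟨i', rfl⟩ : ∃ i', i = i' + 1 := ⟨i - 1, by omega⟩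
    calc j.choose (i' + 1) < (j + 1).choose (i' + 1) := by
          rw [Nat.choose_succ_succ]
          have : 0 < j.choose i' := Nat.choose_pos (by omega)
          simp only [Nat.succ_eq_add_one]
          omega
        _ ≤ N.choose (i' + 1) := Nat.choose_le_choose _ hjN'
  omega
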